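/- arXiv:1703.08131 — 4 statements merged into one kernel-verified Lean document; each statement's English description precedes it below -/
import Mathlib

section
/- For a shift-invariant positive definite kernel κ on ℝ^d with Fourier transform p(ω) (a probability density by Bochner's theorem), defining z_{ω,b}(x) = √2·cos(ωᵀx + b), one has κ(x − y) = E_{ω,b}[z_{ω,b}(x)·z_{ω,b}(y)], where ω is drawn from p and b uniformly from [0, 2π]. -/
open MeasureTheory Real

lemma aux_phase (θ φ : ℝ) :
    ∫ b in (0:ℝ)..(2 * π),
      (Real.sqrt 2 * Real.cos (θ + b)) * (Real.sqrt 2 * Real.cos (φ + b))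
      = 2 * π * Real.cos (θ - φ) := by
  have h2 : Real.sqrt 2 * Real.sqrt 2 = 2 := Real.mul_self_sqrt (by norm_num)
  have key : ∀ b : ℝ, (Real.sqrt 2 * Real.cos (θ + b)) * (Real.sqrt 2 * Real.cos (φ + b))
      = Real.cos (θ - φ) + Real.cos ((θ + φ) + 2 * b) := by
    intro b
    rw [show θ - φ = (θ + b) - (φ + b) by ring,
      show (θ + φ) + 2 * b = (θ + b) + (φ + b) by ring,
      Real.cos_sub (θ + b) (φ + b), Real.cos_add (θ + b) (φ + b)]
    linear_combination (Real.cos (θ + b) * Real.cos (φ + b)) * h2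
  have hcont1 : IntervalIntegrable (fun _ : ℝ => Real.cos (θ - φ)) volume 0 (2 * π) :=
    intervalIntegrable_const
  have hcont2 : IntervalIntegrable (fun b : ℝ => Real.cos ((θ + φ) + 2 * b)) volume 0 (2 * π) :=
    (Real.continuous_cos.comp (continuous_const.add (continuous_const.mul continuous_id))).intervalIntegrable _ _
  have hint2 : ∫ b in (0:ℝ)..(2 * π), Real.cos ((θ + φ) + 2 * b) = 0 := by
    have hderiv : ∀ b ∈ Set.uIcc (0:ℝ) (2 * π),
        HasDerivAt (fun b : ℝ => Real.sin ((θ + φ) + 2 * b) / 2)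
          (Real.cos ((θ + φ) + 2 * b)) b := by
      intro b _
      have h1 : HasDerivAt (fun b : ℝ => (θ + φ) + 2 * b) 2 b := by
        simpa using ((hasDerivAt_id b).const_mul 2).const_add (θ + φ)
      have := ((Real.hasDerivAt_sin ((θ + φ) + 2 * b)).comp b h1).div_const 2
      simpa [mul_comm, mul_div_assoc] using this
    rw [intervalIntegral.integral_eq_sub_of_hasDerivAt hderiv
      ((Real.continuous_cos.comp (continuous_const.add
        (continuous_const.mul continuous_id))).intervalIntegrable _ _)]
    have : (θ + φ) + 2 * (2 * π) = ((θ + φ) + 2 * 0 + 2 * π) + 2 * π := by ring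
    rw [this, Real.sin_add_two_pi, Real.sin_add_two_pi]
    ring
  calc ∫ b in (0:ℝ)..(2 * π),
        (Real.sqrt 2 * Real.cos (θ + b)) * (Real.sqrt 2 * Real.cos (φ + b))
      = ∫ b in (0:ℝ)..(2 * π), (Real.cos (θ - φ) + Real.cos ((θ + φ) + 2 * b)) := by
        simp only [key]
    _ = (∫ _ in (0:ℝ)..(2 * π), Real.cos (θ - φ)) +
        ∫ b in (0:ℝ)..(2 * π), Real.cos ((θ + φ) + 2 * b) :=
        intervalIntegral.integral_add hcont1 hcont2
    _ = 2 * π * Real.cos (θ - φ) := by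
        rw [hint2, intervalIntegral.integral_const]
        simp [smul_eq_mul]

/-- **Random Fourier features identity.** If a continuous shift-invariant kernel `κ` on `ℝ^d`
with `κ 0 = 1` has a (Bochner) representation via a probability density `p`, i.e.
`κ δ = ∫ ω, p ω * cos (⟪ω, δ⟫)`, then for `z_{ω,b}(x) = √2 cos(ωᵀx + b)` we have
`κ (x - y) = E_{ω,b}[z_{ω,b}(x) z_{ω,b}(y)]`, where `ω ∼ p` and `b` is uniform on `[0, 2π]`. -/
theorem stmt0 (d : ℕ) (κ : EuclideanSpace ℝ (Fin d) → ℝ)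
    (p : EuclideanSpace ℝ (Fin d) → ℝ)
    (hκcont : Continuous κ) (hκ0 : κ 0 = 1)
    (hp_nonneg : ∀ ω, 0 ≤ p ω) (hp_prob : ∫ ω, p ω = 1)
    (hBochner : ∀ δ, κ δ = ∫ ω, p ω * Real.cos (inner ℝ ω δ)) :
    ∀ x y : EuclideanSpace ℝ (Fin d),
      κ (x - y) =
        ∫ ω, p ω * ((2 * π)⁻¹ *
          ∫ b in (0:ℝ)..(2 * π),
            (Real.sqrt 2 * Real.cos (inner ℝ ω x + b)) *
            (Real.sqrt 2 * Real.cos (inner ℝ ω y + b))) := by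
  intro x y
  rw [hBochner]
  congr 1
  funext ω
  rw [aux_phase]
  have hπ : (2 * π) ≠ 0 := by positivity
  rw [show (inner ℝ ω x - inner ℝ ω y : ℝ) = inner ℝ ω (x - y) by rw [inner_sub_right]]
  field_simp
end

section
/- Consider iterates θ̲_{n+1} = 𝐀 θ̲_n + r̲_n in ℝ^{KD} with 𝐀 = X + BBᵀ, ‖X‖ < 1, X·BBᵀ = BBᵀ·X = BBᵀ − BBᵀ (i.e., (I−BBᵀ)𝐀 = X(I−BBᵀ)) and r̲_n → 0. Then ‖(I_{KD} − BBᵀ) θ̲_{n+1}‖ → 0 as n → ∞; i.e., the iterates asymptotically approach the consensus subspace. -/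
open Filter Topology

set_option synthInstance.maxHeartbeats 1000000
set_option maxHeartbeats 1000000

lemma aux_contract (u b : ℕ → ℝ) (c : ℝ) (hc0 : 0 ≤ c) (hc1 : c < 1)
    (hu : ∀ n, 0 ≤ u n) (hrec : ∀ n, u (n + 1) ≤ c * u n + b n)
    (hb : Tendsto b atTop (𝓝 0)) : Tendsto u atTop (𝓝 0) := by
  rw [Metric.tendsto_atTop] at hb ⊢
  intro ε hε
  have h1c : 0 < 1 - c := by linarith
  obtain ⟨N, hN⟩ := hb (ε * (1 - c) / 4) (by positivity)
  have hNb : ∀ n ≥ N, b n ≤ ε * (1 - c) / 4 := by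
    intro n hn
    have := hN n hn
    rw [Real.dist_eq, sub_zero] at this
    exact (le_abs_self _).trans this.le
  have key : ∀ m, u (N + m) ≤ c ^ m * u N + ε / 4 := by
    intro m
    induction m with
    | zero => simp; nlinarith [hε]
    | succ m ih =>
      have h1 : u (N + m + 1) ≤ c * u (N + m) + b (N + m) := hrec _
      have h2 : b (N + m) ≤ ε * (1 - c) / 4 := hNb _ (Nat.le_add_right _ _)
      have h3 : c * u (N + m) ≤ c * (c ^ m * u N + ε / 4) :=
        mul_le_mul_of_nonneg_left ih hc0
      have : u (N + (m + 1)) ≤ c * (c ^ m * u N + ε / 4) + ε * (1 - c) / 4 := by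
        have : N + (m + 1) = N + m + 1 := by ring
        rw [this]; linarith
      calc u (N + (m + 1)) ≤ c * (c ^ m * u N + ε / 4) + ε * (1 - c) / 4 := this
        _ ≤ c ^ (m + 1) * u N + ε / 4 := by ring_nf; nlinarith
  have hpow : Tendsto (fun m => c ^ m * u N) atTop (𝓝 0) := by
    simpa using (tendsto_pow_atTop_nhds_zero_of_lt_one hc0 hc1).mul_const (u N)
  rw [Metric.tendsto_atTop] at hpow
  obtain ⟨M, hM⟩ := hpow (ε / 4) (by positivity)
  refine ⟨N + M, fun n hn => ?_⟩
  obtain ⟨m, rfl⟩ := Nat.exists_eq_add_of_le hn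
  have hMm : M ≤ M + m := Nat.le_add_right _ _
  have h1 : c ^ (M + m) * u N ≤ c ^ M * u N := by
    apply mul_le_mul_of_nonneg_right _ (hu N)
    exact pow_le_pow_of_le_one hc0 hc1.le hMm
  have h2 : c ^ M * u N < ε / 4 := by
    have := hM M le_rfl
    rw [Real.dist_eq, sub_zero] at this
    exact (le_abs_self _).trans_lt this
  have h3 : u (N + (M + m)) ≤ c ^ (M + m) * u N + ε / 4 := key _
  rw [Real.dist_eq, sub_zero, abs_of_nonneg (hu _)]
  show u (N + M + m) < ε
  have : N + M + m = N + (M + m) := by ring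
  rw [this]
  linarith

/-- **Asymptotic approach to the consensus subspace.** Let `𝐀 = X + P` act on `ℝ^{KD}`,
where `P` is the orthogonal projection onto the consensus subspace (symmetric, idempotent),
`‖X‖ < 1`, `(I − P) ∘ 𝐀 = X ∘ (I − P)`, and consider iterates `θ (n+1) = 𝐀 (θ n) + r n`
with `‖r n‖ → 0`. Then `‖(I − P) (θ (n+1))‖ → 0`. -/
theorem stmt7 {K D : ℕ}
    (X P : EuclideanSpace ℝ (Fin K × Fin D) →L[ℝ] EuclideanSpace ℝ (Fin K × Fin D))
    (hPsym : ∀ u v, inner ℝ (P u) v = (inner ℝ u (P v) : ℝ))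
    (hPidem : P ∘L P = P)
    (hX : ‖X‖ < 1)
    (hcomm : (ContinuousLinearMap.id ℝ _ - P) ∘L (X + P) = X ∘L (ContinuousLinearMap.id ℝ _ - P))
    (θ r : ℕ → EuclideanSpace ℝ (Fin K × Fin D))
    (hiter : ∀ n, θ (n + 1) = (X + P) (θ n) + r n)
    (hr : Tendsto (fun n => ‖r n‖) atTop (𝓝 0)) :
    Tendsto (fun n => ‖θ (n + 1) - P (θ (n + 1))‖) atTop (𝓝 0) := by
  set Q := ContinuousLinearMap.id ℝ (EuclideanSpace ℝ (Fin K × Fin D)) - P with hQ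
  have hQapp : ∀ x, Q x = x - P x := fun x => by
    simp [hQ, ContinuousLinearMap.sub_apply]
  have hstep : ∀ n, Q (θ (n + 1)) = X (Q (θ n)) + Q (r n) := by
    intro n
    rw [hiter n, map_add]
    congr 1
    have := congrArg (fun f => f (θ n)) hcomm
    simpa using this
  have hv : Tendsto (fun n => ‖Q (θ n)‖) atTop (𝓝 0) := by
    apply aux_contract _ (fun n => ‖Q‖ * ‖r n‖) ‖X‖ (norm_nonneg X) hX
      (fun n => norm_nonneg _) _ (by simpa using hr.const_mul ‖Q‖)
    intro n
    rw [hstep n]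
    calc ‖X (Q (θ n)) + Q (r n)‖ ≤ ‖X (Q (θ n))‖ + ‖Q (r n)‖ := norm_add_le _ _
      _ ≤ ‖X‖ * ‖Q (θ n)‖ + ‖Q‖ * ‖r n‖ :=
        add_le_add (X.le_opNorm _) (Q.le_opNorm _)
  have := hv.comp (tendsto_add_atTop_nat 1)
  simpa [Function.comp_def, hQapp] using this
end

section
/- The functions x ↦ cos(ωᵢᵀx + bᵢ), i = 1,…,D, on ℝ^d are linearly independent over ℝ provided ωᵢ ≠ ±ω_j for i ≠ j and, whenever ωᵢ = 0, cos(bᵢ) ≠ 0: that is, if Σ_{i=1}^D cᵢ cos(ωᵢᵀx + bᵢ) = 0 for all x ∈ ℝ^d, then c = 0. -/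
open Complex

noncomputable def chr {d : ℕ} (w : EuclideanSpace ℝ (Fin d)) :
    Multiplicative (EuclideanSpace ℝ (Fin d)) →* ℂ where
  toFun x := Complex.exp ((inner ℝ w x.toAdd : ℝ) * Complex.I)
  map_one' := by simp [toAdd_one]
  map_mul' x y := by
    show Complex.exp _ = _
    rw [← Complex.exp_add]
    congr 1
    rw [toAdd_mul, inner_add_right]
    push_cast
    ring

lemma chr_apply {d : ℕ} (w : EuclideanSpace ℝ (Fin d))
    (x : Multiplicative (EuclideanSpace ℝ (Fin d))) :
    chr w x = Complex.exp ((inner ℝ w x.toAdd : ℝ) * Complex.I) := rfl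

lemma chr_apply_ofAdd {d : ℕ} (w x : EuclideanSpace ℝ (Fin d)) :
    chr w (Multiplicative.ofAdd x) = Complex.exp ((inner ℝ w x : ℝ) * Complex.I) := rfl

lemma chr_inj {d : ℕ} : Function.Injective (chr (d := d)) := by
  intro w w' h
  by_contra hne
  have hv : w - w' ≠ 0 := sub_ne_zero.mpr hne
  set x : EuclideanSpace ℝ (Fin d) := (Real.pi / ‖w - w'‖ ^ 2) • (w - w') with hxdef
  have hx : chr w (Multiplicative.ofAdd x) = chr w' (Multiplicative.ofAdd x) := by rw [h]
  rw [chr_apply_ofAdd, chr_apply_ofAdd] at hx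
  have h1 : (inner ℝ w x : ℝ) - inner ℝ w' x = Real.pi := by
    have h2 : (inner ℝ (w - w') x : ℝ) = Real.pi := by
      rw [hxdef, real_inner_smul_right, real_inner_self_eq_norm_sq]
      field_simp [pow_ne_zero 2 (norm_ne_zero_iff.mpr hv)]
    rwa [inner_sub_left] at h2
  rw [Complex.exp_eq_exp_iff_exists_int] at hx
  obtain ⟨n, hn⟩ := hx
  have hI : ((inner ℝ w x : ℝ) : ℂ) * I = (((inner ℝ w' x : ℝ) : ℂ) + n * (2 * Real.pi)) * I := by
    rw [hn]; ring
  have hc : ((inner ℝ w x : ℝ) : ℂ) = ((inner ℝ w' x : ℝ) : ℂ) + n * (2 * Real.pi) :=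
    mul_right_cancel₀ I_ne_zero hI
  have hre : (inner ℝ w x : ℝ) = (inner ℝ w' x : ℝ) + n * (2 * Real.pi) := by exact_mod_cast hc
  rw [hre] at h1
  have h3 : (n : ℝ) * 2 = 1 := by
    have hpi := Real.pi_ne_zero
    have h4 : ((n : ℝ) * 2 - 1) * Real.pi = 0 := by linarith
    rcases mul_eq_zero.mp h4 with h5 | h5
    · linarith
    · exact absurd h5 hpi
  have h6 : ((n * 2 : ℤ) : ℝ) = ((1 : ℤ) : ℝ) := by push_cast; linarith
  have := Int.cast_injective h6
  omega

lemma key_cos (c θ b : ℝ) :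
    (c : ℂ) * Complex.exp (b * I) / 2 * Complex.exp (θ * I) +
      (c : ℂ) * Complex.exp (-b * I) / 2 * Complex.exp (-θ * I) =
      ((c * Real.cos (θ + b) : ℝ) : ℂ) := by
  push_cast [Complex.ofReal_cos]
  rw [Complex.cos]
  rw [show (-((θ:ℂ)+b))*I = -θ*I + -b*I by ring, Complex.exp_add,
    show ((θ:ℂ)+b)*I = θ*I + b*I by ring, Complex.exp_add]
  ring

lemma neg_eq_self_zero {V : Type*} [AddCommGroup V] [Module ℝ V] {v : V}
    (h : -v = v) : v = 0 := by
  have h2 : (2 : ℝ) • v = 0 := by rw [two_smul]; nth_rewrite 1 [← h]; exact neg_add_cancel v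
  simpa using (smul_eq_zero.mp h2).resolve_left (by norm_num)

/-- **Linear independence of shifted cosines.** If `ωᵢ ≠ ±ω_j` for `i ≠ j` and
`cos(bᵢ) ≠ 0` whenever `ωᵢ = 0`, then `Σᵢ cᵢ cos(ωᵢᵀx + bᵢ) = 0` for all `x ∈ ℝ^d`
implies `c = 0`. -/
theorem stmt14 {d D : ℕ}
    (ω : Fin D → EuclideanSpace ℝ (Fin d)) (b : Fin D → ℝ) (c : Fin D → ℝ)
    (hω : ∀ i j, i ≠ j → ω i ≠ ω j ∧ ω i ≠ -ω j)
    (hb : ∀ i, ω i = 0 → Real.cos (b i) ≠ 0)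
    (hzero : ∀ x : EuclideanSpace ℝ (Fin d),
      ∑ i, c i * Real.cos ((inner ℝ (ω i) x : ℝ) + b i) = 0) :
    c = 0 := by
  classical
  set a : Fin D → ℂ := fun i => (c i : ℂ) * Complex.exp (b i * I) / 2 with ha
  set a' : Fin D → ℂ := fun i => (c i : ℂ) * Complex.exp (-b i * I) / 2 with ha'
  set l : (Multiplicative (EuclideanSpace ℝ (Fin d)) →* ℂ) →₀ ℂ :=
    ∑ i, (Finsupp.single (chr (ω i)) (a i) + Finsupp.single (chr (-ω i)) (a' i)) with hldef
  have htot : Finsupp.linearCombination ℂ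
      (fun f : Multiplicative (EuclideanSpace ℝ (Fin d)) →* ℂ => (f : Multiplicative (EuclideanSpace ℝ (Fin d)) → ℂ)) l = 0 := by
    rw [hldef, map_sum]
    funext x
    have hsum : ∀ i : Fin D,
        (Finsupp.linearCombination ℂ (fun f : Multiplicative (EuclideanSpace ℝ (Fin d)) →* ℂ =>
            (f : Multiplicative (EuclideanSpace ℝ (Fin d)) → ℂ)))
          (Finsupp.single (chr (ω i)) (a i) + Finsupp.single (chr (-ω i)) (a' i)) x
        = ((c i * Real.cos ((inner ℝ (ω i) x.toAdd : ℝ) + b i) : ℝ) : ℂ) := by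
      intro i
      rw [map_add, Finsupp.linearCombination_single, Finsupp.linearCombination_single]
      simp only [Pi.add_apply, Pi.smul_apply, smul_eq_mul]
      rw [chr_apply, chr_apply, inner_neg_left]
      rw [show (↑(-(inner ℝ (ω i) x.toAdd : ℝ)) : ℂ) * I
          = -(((inner ℝ (ω i) x.toAdd : ℝ)) : ℂ) * I by push_cast; ring]
      exact key_cos (c i) _ (b i)
    calc (∑ i, (Finsupp.linearCombination ℂ (fun f : Multiplicative (EuclideanSpace ℝ (Fin d)) →* ℂ =>
            (f : Multiplicative (EuclideanSpace ℝ (Fin d)) → ℂ)))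
          (Finsupp.single (chr (ω i)) (a i) + Finsupp.single (chr (-ω i)) (a' i))) x
        = ∑ i, ((c i * Real.cos ((inner ℝ (ω i) x.toAdd : ℝ) + b i) : ℝ) : ℂ) := by
          rw [Finset.sum_apply]; exact Finset.sum_congr rfl fun i _ => hsum i
      _ = ((∑ i, c i * Real.cos ((inner ℝ (ω i) x.toAdd : ℝ) + b i) : ℝ) : ℂ) := by push_cast; rfl
      _ = 0 := by rw [hzero x.toAdd]; norm_num
  have hl : l = 0 :=
    linearIndependent_iff.mp (linearIndependent_monoidHom _ ℂ) l htot
  funext i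
  show c i = 0
  have hothers : ∀ j ∈ Finset.univ, j ≠ i →
      (Finsupp.single (chr (ω j)) (a j) + Finsupp.single (chr (-ω j)) (a' j)) (chr (ω i)) = 0 := by
    intro j _ hji
    simp only [Finsupp.add_apply, Finsupp.single_apply]
    rw [if_neg (fun h => (hω j i hji).1 (chr_inj h)),
      if_neg (fun h => (hω i j hji.symm).2 (chr_inj h).symm)]
    norm_num
  by_cases h0 : ω i = 0
  · have hli : l (chr (ω i)) = a i + a' i := by
      rw [hldef, Finsupp.finset_sum_apply]
      rw [Finset.sum_eq_single i hothers (fun h => absurd (Finset.mem_univ i) h)]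
      simp only [Finsupp.add_apply, Finsupp.single_apply, h0, neg_zero, if_pos rfl]
      simp
    have hcos : a i + a' i = ((c i * Real.cos (b i) : ℝ) : ℂ) := by
      have hk := key_cos (c i) 0 (b i)
      simp only [Complex.ofReal_zero, zero_mul, neg_zero, Complex.exp_zero, mul_one,
        zero_add] at hk
      rw [ha, ha']; exact hk
    have hz : ((c i * Real.cos (b i) : ℝ) : ℂ) = 0 := by
      rw [← hcos, ← hli, hl, Finsupp.zero_apply]
    have hr : c i * Real.cos (b i) = 0 := by exact_mod_cast hz
    rcases mul_eq_zero.mp hr with h | h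
    · exact h
    · exact absurd h (hb i h0)
  · have hli : l (chr (ω i)) = a i := by
      rw [hldef, Finsupp.finset_sum_apply]
      rw [Finset.sum_eq_single i hothers (fun h => absurd (Finset.mem_univ i) h)]
      simp only [Finsupp.add_apply, Finsupp.single_apply, if_pos rfl]
      rw [if_neg (fun h => h0 (neg_eq_self_zero (chr_inj h)))]
      simp
    have hz : a i = 0 := by rw [← hli, hl, Finsupp.zero_apply]
    rw [ha] at hz
    simp only [div_eq_zero_iff, mul_eq_zero, Complex.ofReal_eq_zero,
      Complex.exp_ne_zero, or_false] at hz
    rcases hz with h | h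
    · exact h
    · norm_num at h
end

section
/- Consider the matrix recursion B_n = A·B_{n−1}·Aᵀ − μ·A·B_{n−1}·Aᵀ·R − μ·R·A·B_{n−1}·Aᵀ + μ²σ²R on symmetric m×m matrices. Its vectorization satisfies vec(B_n) = (I_{m²} − μ(R ⊗ I_m + I_m ⊗ R))(A ⊗ A)·vec(B_{n−1}) + μ²σ²·vec(R); hence the recursion converges (for any initial B_0) if the spectral radius of (I_{m²} − μ(R ⊗ I_m + I_m ⊗ R))(A ⊗ A) is strictly less than 1. -/
open Matrix Kronecker Filter Topology

private lemma kronVec {m : ℕ} (D E C : Matrix (Fin m) (Fin m) ℝ) :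
    (E ⊗ₖ D).mulVec (fun p => C p.2 p.1) = fun p => (D * C * Eᵀ) p.2 p.1 := by
  funext p
  simp only [Matrix.mulVec, dotProduct, kroneckerMap_apply, Matrix.mul_apply,
    Matrix.transpose_apply]
  rw [Fintype.sum_prod_type]
  simp_rw [Finset.sum_mul]
  refine Finset.sum_congr rfl fun k _ => Finset.sum_congr rfl fun l _ => by ring

private lemma pow_tendsto_zero {𝔸 : Type*} [NormedRing 𝔸] [NormedAlgebra ℂ 𝔸] [CompleteSpace 𝔸]
    (a : 𝔸) (h : ∀ z ∈ spectrum ℂ a, ‖z‖ < 1) :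
    Tendsto (fun n : ℕ => ‖a ^ n‖) atTop (𝓝 0) := by
  have hsr : spectralRadius ℂ a < 1 := by
    rcases (spectrum ℂ a).eq_empty_or_nonempty with he | hne
    · rw [spectralRadius, he]
      simp
    · obtain ⟨z, hz, hz2⟩ := spectrum.exists_nnnorm_eq_spectralRadius_of_nonempty hne
      rw [← hz2]
      have : ‖z‖₊ < 1 := by
        rw [← NNReal.coe_lt_one]
        exact h z hz
      exact_mod_cast this
  obtain ⟨r, hr1, hr2⟩ := exists_between hsr
  have hG := spectrum.pow_nnnorm_pow_one_div_tendsto_nhds_spectralRadius a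
  have hev : ∀ᶠ n : ℕ in atTop, (‖a ^ n‖₊ : ENNReal) ^ (1 / (n : ℝ)) < r :=
    hG.eventually_lt_const hr1
  have hub : ∀ᶠ n : ℕ in atTop, (‖a ^ n‖₊ : ENNReal) ≤ r ^ n := by
    filter_upwards [hev, eventually_ge_atTop 1] with n hlt hn
    have hn' : (n : ℝ) ≠ 0 := Nat.cast_ne_zero.mpr (by omega)
    calc (‖a ^ n‖₊ : ENNReal)
        = ((‖a ^ n‖₊ : ENNReal) ^ (1 / (n : ℝ))) ^ (n : ℝ) := by
          rw [← ENNReal.rpow_mul, one_div, inv_mul_cancel₀ hn', ENNReal.rpow_one]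
      _ ≤ r ^ (n : ℝ) := ENNReal.rpow_le_rpow hlt.le (Nat.cast_nonneg n)
      _ = r ^ n := ENNReal.rpow_natCast r n
  have h0 : Tendsto (fun n : ℕ => (‖a ^ n‖₊ : ENNReal)) atTop (𝓝 0) :=
    tendsto_of_tendsto_of_tendsto_of_le_of_le'
      tendsto_const_nhds (ENNReal.tendsto_pow_atTop_nhds_zero_of_lt_one hr2)
      (Eventually.of_forall fun n => zero_le) hub
  have h1 : Tendsto (fun n : ℕ => ‖a ^ n‖₊) atTop (𝓝 0) := by
    rw [← ENNReal.coe_zero] at h0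
    exact ENNReal.tendsto_coe.mp h0
  have h2 : Tendsto (fun n : ℕ => (‖a ^ n‖₊ : ℝ)) atTop (𝓝 ((0 : NNReal) : ℝ)) :=
    NNReal.tendsto_coe.mpr h1
  simpa using h2

/-- **Vectorized covariance recursion and its convergence.** The recursion
`B_n = A B_{n−1} Aᵀ − μ A B_{n−1} Aᵀ R − μ R A B_{n−1} Aᵀ + μ²σ² R` on `m × m` matrices
vectorizes (with column-stacking `vec`, satisfying `vec(D C Eᵀ) = (E ⊗ D) vec C`) as
`vec B_n = (I − μ(R ⊗ I + I ⊗ R))(A ⊗ A) vec B_{n−1} + μ²σ² vec R`; hence if the spectral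
radius of `(I − μ(R ⊗ I + I ⊗ R))(A ⊗ A)` is `< 1`, the sequence `B_n` converges for any
initial `B₀`. -/
theorem stmt19 {m : ℕ}
    (A R : Matrix (Fin m) (Fin m) ℝ) (hRsym : R.IsSymm)
    (μ σ : ℝ) (hμ : 0 < μ) (hσ : 0 < σ)
    (B : ℕ → Matrix (Fin m) (Fin m) ℝ)
    (hBrec : ∀ n ≥ 1, B n =
      A * B (n - 1) * Aᵀ - μ • (A * B (n - 1) * Aᵀ * R) -
        μ • (R * (A * B (n - 1) * Aᵀ)) + (μ ^ 2 * σ ^ 2) • R)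
    (vec : Matrix (Fin m) (Fin m) ℝ → (Fin m × Fin m → ℝ))
    (hvec : ∀ C p, vec C p = C p.2 p.1) :
    (∀ n ≥ 1, vec (B n) =
        ((1 - μ • (R ⊗ₖ (1 : Matrix (Fin m) (Fin m) ℝ) +
            (1 : Matrix (Fin m) (Fin m) ℝ) ⊗ₖ R)) * (A ⊗ₖ A)).mulVec
          (vec (B (n - 1))) + (μ ^ 2 * σ ^ 2) • vec R) ∧
    ((∀ z ∈ spectrum ℂ
        (((1 - μ • (R ⊗ₖ (1 : Matrix (Fin m) (Fin m) ℝ) +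
            (1 : Matrix (Fin m) (Fin m) ℝ) ⊗ₖ R)) * (A ⊗ₖ A)).map
          (Complex.ofReal : ℝ → ℂ)), ‖z‖ < 1) →
      ∃ Blim : Matrix (Fin m) (Fin m) ℝ, Tendsto B atTop (𝓝 Blim)) := by
  set M := (1 - μ • (R ⊗ₖ (1 : Matrix (Fin m) (Fin m) ℝ) +
      (1 : Matrix (Fin m) (Fin m) ℝ) ⊗ₖ R)) * (A ⊗ₖ A) with hM
  -- the key vectorization identity
  have key : ∀ C : Matrix (Fin m) (Fin m) ℝ, M.mulVec (vec C) =
      fun p => (A * C * Aᵀ) p.2 p.1 -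
        μ * ((A * C * Aᵀ * R) p.2 p.1 + (R * (A * C * Aᵀ)) p.2 p.1) := by
    intro C
    have hv : vec C = fun p => C p.2 p.1 := funext (hvec C)
    rw [hM, ← Matrix.mulVec_mulVec, hv, kronVec A A C, Matrix.sub_mulVec, Matrix.one_mulVec,
      Matrix.smul_mulVec, Matrix.add_mulVec,
      kronVec (1 : Matrix (Fin m) (Fin m) ℝ) R (A * C * Aᵀ),
      kronVec R (1 : Matrix (Fin m) (Fin m) ℝ) (A * C * Aᵀ)]
    funext p
    simp only [Pi.sub_apply, Pi.add_apply, Pi.smul_apply, smul_eq_mul, Matrix.one_mul,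
      Matrix.mul_one, hRsym.eq, Matrix.transpose_one]
  have hpart1 : ∀ n ≥ 1, vec (B n) =
      M.mulVec (vec (B (n - 1))) + (μ ^ 2 * σ ^ 2) • vec R := by
    intro n hn
    rw [key (B (n - 1)), hBrec n hn]
    funext p
    simp only [Pi.add_apply, Pi.smul_apply, smul_eq_mul, hvec, Matrix.add_apply,
      Matrix.sub_apply, Matrix.smul_apply]
    ring
  refine ⟨hpart1, fun hspec => ?_⟩
  -- set up the complex Banach algebra structure on matrices
  letI : NormedRing (Matrix (Fin m × Fin m) (Fin m × Fin m) ℂ) := Matrix.linftyOpNormedRing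
  letI : NormedAlgebra ℂ (Matrix (Fin m × Fin m) (Fin m × Fin m) ℂ) :=
    Matrix.linftyOpNormedAlgebra
  haveI : CompleteSpace (Matrix (Fin m × Fin m) (Fin m × Fin m) ℂ) :=
    FiniteDimensional.complete ℂ _
  set Mc := M.map (Complex.ofReal : ℝ → ℂ) with hMc
  have hpow : Tendsto (fun n : ℕ => ‖Mc ^ n‖) atTop (𝓝 0) := pow_tendsto_zero Mc hspec
  have hmap : ∀ n : ℕ, (M ^ n).map (Complex.ofReal : ℝ → ℂ) = Mc ^ n := by
    intro n
    have h := map_pow (Complex.ofRealHom.mapMatrix :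
      Matrix (Fin m × Fin m) (Fin m × Fin m) ℝ →+* Matrix (Fin m × Fin m) (Fin m × Fin m) ℂ) M n
    simp [RingHom.mapMatrix_apply, hMc] at h; exact h
  have hentrybound : ∀ (X : Matrix (Fin m × Fin m) (Fin m × Fin m) ℂ) p q, ‖X p q‖ ≤ ‖X‖ := by
    intro X p q
    have h1 : ‖X p q‖₊ ≤ ‖X‖₊ := by
      rw [Matrix.linfty_opNNNorm_def]
      exact le_trans
        (Finset.single_le_sum (f := fun j => ‖X p j‖₊) (fun _ _ => zero_le) (Finset.mem_univ q))
        (Finset.le_sup (f := fun i => ∑ j, ‖X i j‖₊) (Finset.mem_univ p))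
    exact_mod_cast h1
  have hentry : ∀ p q, Tendsto (fun n : ℕ => (M ^ n) p q) atTop (𝓝 0) := by
    intro p q
    rw [tendsto_zero_iff_norm_tendsto_zero]
    refine squeeze_zero (fun n => norm_nonneg _) (fun n => ?_) hpow
    have h1 : ‖(M ^ n) p q‖ = ‖(Mc ^ n) p q‖ := by
      rw [← hmap n]
      simp [Matrix.map_apply]
    rw [h1]
    exact hentrybound _ p q
  -- 1 - M is invertible
  have hone : (1 : ℂ) ∉ spectrum ℂ Mc := fun hmem => absurd (hspec 1 hmem) (by norm_num)
  have hunit : IsUnit ((1 : Matrix (Fin m × Fin m) (Fin m × Fin m) ℂ) - Mc) := by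
    have h := spectrum.notMem_iff.mp hone
    simpa using h
  have hdet : IsUnit ((1 : Matrix (Fin m × Fin m) (Fin m × Fin m) ℝ) - M).det := by
    have h1 : ((1 : Matrix (Fin m × Fin m) (Fin m × Fin m) ℝ) - M).map
        (Complex.ofReal : ℝ → ℂ) = 1 - Mc := by
      have h := map_sub (Complex.ofRealHom.mapMatrix :
        Matrix (Fin m × Fin m) (Fin m × Fin m) ℝ →+* Matrix (Fin m × Fin m) (Fin m × Fin m) ℂ) 1 M
      simp [RingHom.mapMatrix_apply, hMc] at h; exact h
    have h2 : ((1 - Mc).det : ℂ) ≠ 0 :=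
      ((Matrix.isUnit_iff_isUnit_det _).mp hunit).ne_zero
    have h3 : (Complex.ofRealHom ((1 - M).det) : ℂ) = (1 - Mc).det := by
      rw [RingHom.map_det, RingHom.mapMatrix_apply]
      exact congrArg Matrix.det h1
    rw [isUnit_iff_ne_zero]
    intro h0
    apply h2
    rw [← h3, h0]
    simp
  -- fixed point
  set c : (Fin m × Fin m) → ℝ := (μ ^ 2 * σ ^ 2) • vec R with hc
  set xstar : (Fin m × Fin m) → ℝ :=
    ((1 - M)⁻¹).mulVec c with hxstar
  have hfix : M.mulVec xstar + c = xstar := by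
    have h1 : (1 - M).mulVec xstar = c := by
      rw [hxstar, Matrix.mulVec_mulVec, Matrix.mul_nonsing_inv _ hdet, Matrix.one_mulVec]
    rw [Matrix.sub_mulVec, Matrix.one_mulVec] at h1
    rw [← h1]
    abel
  have hx : ∀ n : ℕ, vec (B (n + 1)) = M.mulVec (vec (B n)) + c := by
    intro n
    have h := hpart1 (n + 1) (by omega)
    simpa using h
  have herr : ∀ n : ℕ, vec (B n) - xstar = (M ^ n).mulVec (vec (B 0) - xstar) := by
    intro n
    induction n with
    | zero => simp [Matrix.one_mulVec]
    | succ n ih =>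
      have h1 : M.mulVec (vec (B n)) + c - (M.mulVec xstar + c)
          = M.mulVec (vec (B n) - xstar) := by
        rw [Matrix.mulVec_sub]
        abel
      calc vec (B (n + 1)) - xstar
          = M.mulVec (vec (B n)) + c - (M.mulVec xstar + c) := by rw [hx n, hfix]
        _ = M.mulVec (vec (B n) - xstar) := h1
        _ = M.mulVec ((M ^ n).mulVec (vec (B 0) - xstar)) := by rw [ih]
        _ = (M ^ (n + 1)).mulVec (vec (B 0) - xstar) := by
            rw [Matrix.mulVec_mulVec, ← pow_succ']
  have hxlim : ∀ p, Tendsto (fun n : ℕ => vec (B n) p) atTop (𝓝 (xstar p)) := by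
    intro p
    have h1 : Tendsto (fun n : ℕ => ((M ^ n).mulVec (vec (B 0) - xstar)) p) atTop (𝓝 0) := by
      simp only [Matrix.mulVec, dotProduct]
      have h := tendsto_finset_sum (Finset.univ : Finset (Fin m × Fin m))
        (fun q _ => (hentry p q).mul_const ((vec (B 0) - xstar) q))
      simpa using h
    have heq : (fun n : ℕ => vec (B n) p - xstar p)
        = fun n : ℕ => ((M ^ n).mulVec (vec (B 0) - xstar)) p := by
      funext n
      exact congrFun (herr n) p
    have h2 : Tendsto (fun n : ℕ => vec (B n) p - xstar p) atTop (𝓝 0) := by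
      rw [heq]; exact h1
    have h3 := h2.add_const (xstar p)
    simpa using h3
  refine ⟨fun i j => xstar (j, i), ?_⟩
  refine tendsto_pi_nhds.mpr ?_
  intro i
  rw [tendsto_pi_nhds]
  intro j
  have h := hxlim (j, i)
  simp only [hvec] at h
  exact h
end
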